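/- Let G be a finite connected simple graph with independent boundary B, |B| ≥ 2, and injective boundary data u : B → ℝ. An acyclic orientation σ of G respects u if for every directed path in σ from a boundary node i to a boundary node j one has u(i) > u(j). Then the map sending a chamber C of the Dirichlet arrangement A(G,u) to the orientation σ(C), which orients each edge ij from i to j whenever x_i > x_j for some (equivalently any) point x in C, is a bijection from the set of chambers of A(G,u) to the set of acyclic orientations of G respecting u. -/

import Mathlib

set_option linter.unusedVariables false

theorem aux_interp {V : Type*} [Fintype V] (B : Set V) (u : V → ℝ) (hBne : B.Nonempty)
    (L : V → V → Prop) (hLtrans : ∀ {a b c : V}, L a b → L b c → L a c)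
    (hLirr : ∀ a : V, ¬ L a a)
    (hBkey : ∀ {b1 b2 : V}, b1 ∈ B → b2 ∈ B → L b1 b2 → u b2 < u b1) :
    ∃ x : V → ℝ, (∀ j ∈ B, x j = u j) ∧ ∀ i j : V, L i j → x j < x i := by
  classical
  obtain ⟨b0, hb0⟩ := hBne
  obtain ⟨m0, hm0⟩ : ∃ m0 : ℝ, ∀ b ∈ B, m0 < u b := by
    have hne : (Set.Finite.toFinset B.toFinite).Nonempty :=
      ⟨b0, (Set.Finite.mem_toFinset _).mpr hb0⟩
    refine ⟨(Set.Finite.toFinset B.toFinite).inf' hne u - 1, ?_⟩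
    intro b hb
    have h1 : (Set.Finite.toFinset B.toFinite).inf' hne u ≤ u b :=
      Finset.inf'_le u ((Set.Finite.mem_toFinset _).mpr hb)
    linarith
  obtain ⟨lo, hlo_self, hlo_ub, hlo_mem⟩ :
      ∃ lo : V → ℝ,
        (∀ v, (∃ b ∈ B, (v = b ∨ L v b) ∧ lo v = u b) ∨ lo v = m0) ∧
        (∀ v b, b ∈ B → (v = b ∨ L v b) → u b ≤ lo v) ∧
        (∀ v, m0 ≤ lo v) := by
    refine ⟨fun v => (insert m0 (((Set.Finite.toFinset B.toFinite).filter
        (fun b => v = b ∨ L v b)).image u)).max' (Finset.insert_nonempty _ _),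
        fun v => ?_, fun v b hb hvb => ?_, fun v => ?_⟩
    · have h := Finset.max'_mem (insert m0 (((Set.Finite.toFinset B.toFinite).filter
        (fun b => v = b ∨ L v b)).image u)) (Finset.insert_nonempty _ _)
      rcases Finset.mem_insert.mp h with h | h
      · exact Or.inr h
      · obtain ⟨b, hb, heq⟩ := Finset.mem_image.mp h
        obtain ⟨hbB, hvb⟩ := Finset.mem_filter.mp hb
        exact Or.inl ⟨b, (Set.Finite.mem_toFinset _).mp hbB, hvb, heq.symm⟩
    · exact Finset.le_max' _ _ (Finset.mem_insert_of_mem (Finset.mem_image_of_mem u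
        (Finset.mem_filter.mpr ⟨(Set.Finite.mem_toFinset _).mpr hb, hvb⟩)))
    · exact Finset.le_max' _ _ (Finset.mem_insert_self _ _)
  have hlo_mono : ∀ v w, L v w → lo w ≤ lo v := by
    intro v w hvw
    rcases hlo_self w with ⟨b, hbB, hwb, heq⟩ | heq
    · have hLvb : v = b ∨ L v b := by
        rcases hwb with rfl | hwb
        · exact Or.inr hvw
        · exact Or.inr (hLtrans hvw hwb)
      rw [heq]; exact hlo_ub v b hbB hLvb
    · rw [heq]; exact hlo_mem v
  have hloB : ∀ v ∈ B, lo v = u v := by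
    intro v hv
    refine le_antisymm ?_ (hlo_ub v v hv (Or.inl rfl))
    rcases hlo_self v with ⟨b, hbB, hvb, heq⟩ | heq
    · rw [heq]
      rcases hvb with rfl | hvb
      · exact le_refl _
      · exact (hBkey hv hbB hvb).le
    · rw [heq]; exact (hm0 v hv).le
  have hlo_ltB : ∀ v, v ∈ B → ∀ w, L v w → lo w < u v := by
    intro v hv w hvw
    rcases hlo_self w with ⟨b, hbB, hwb, heq⟩ | heq
    · rw [heq]
      refine hBkey hv hbB ?_
      rcases hwb with rfl | hwb
      · exact hvw
      · exact hLtrans hvw hwb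
    · rw [heq]; exact hm0 v hv
  obtain ⟨δ, hδpos, hδle⟩ : ∃ δ : ℝ, 0 < δ ∧ ∀ v w : V, lo w < lo v → δ ≤ lo v - lo w := by
    by_cases hP : ((Finset.univ ×ˢ Finset.univ : Finset (V × V)).filter
        (fun p => lo p.2 < lo p.1)).Nonempty
    · refine ⟨((Finset.univ ×ˢ Finset.univ : Finset (V × V)).filter
          (fun p => lo p.2 < lo p.1)).inf' hP (fun p => lo p.1 - lo p.2), ?_, ?_⟩
      · rw [Finset.lt_inf'_iff]
        intro p hp
        have := (Finset.mem_filter.mp hp).2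
        linarith
      · intro v w hvw
        have hmem : (v, w) ∈ (Finset.univ ×ˢ Finset.univ : Finset (V × V)).filter
            (fun p => lo p.2 < lo p.1) :=
          Finset.mem_filter.mpr
            ⟨Finset.mem_product.mpr ⟨Finset.mem_univ _, Finset.mem_univ _⟩, hvw⟩
        exact Finset.inf'_le (fun p => lo p.1 - lo p.2) hmem
    · refine ⟨1, one_pos, ?_⟩
      intro v w hvw
      have hmem : (v, w) ∈ (Finset.univ ×ˢ Finset.univ : Finset (V × V)).filter
          (fun p => lo p.2 < lo p.1) :=
        Finset.mem_filter.mpr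
          ⟨Finset.mem_product.mpr ⟨Finset.mem_univ _, Finset.mem_univ _⟩, hvw⟩
      exact absurd ⟨(v, w), hmem⟩ hP
  obtain ⟨g, hg_le, hg_lt, hgB⟩ :
      ∃ g : V → ℕ, (∀ v, g v ≤ Fintype.card V) ∧
        (∀ v w, L v w → lo w = lo v → g w < g v) ∧ (∀ v ∈ B, g v = 0) := by
    refine ⟨fun v => (Finset.univ.filter (fun w => L v w ∧ lo w = lo v)).card,
      fun v => ?_, fun v w hvw heq => ?_, fun v hv => ?_⟩
    · simpa using Finset.card_filter_le Finset.univ (fun w => L v w ∧ lo w = lo v)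
    · apply Finset.card_lt_card
      constructor
      · intro t ht
        obtain ⟨_, htw, hteq⟩ := Finset.mem_filter.mp ht
        exact Finset.mem_filter.mpr ⟨Finset.mem_univ t, hLtrans hvw htw, hteq.trans heq⟩
      · intro hsub
        have hwmem : w ∈ Finset.univ.filter (fun t => L v t ∧ lo t = lo v) :=
          Finset.mem_filter.mpr ⟨Finset.mem_univ w, hvw, heq⟩
        exact hLirr w (Finset.mem_filter.mp (hsub hwmem)).2.1
    · rw [Finset.card_eq_zero]
      apply Finset.eq_empty_iff_forall_notMem.mpr
      intro w hw
      obtain ⟨_, hvw, heq⟩ := Finset.mem_filter.mp hw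
      have h1 := hlo_ltB v hv w hvw
      rw [heq, hloB v hv] at h1
      exact lt_irrefl _ h1
  have hc1 : (0:ℝ) < (Fintype.card V : ℝ) + 1 := by positivity
  set ε : ℝ := δ / ((Fintype.card V : ℝ) + 1) with hεdef
  have hεpos : 0 < ε := div_pos hδpos hc1
  have hεn : ε * ((Fintype.card V : ℝ) + 1) = δ := div_mul_cancel₀ _ (ne_of_gt hc1)
  refine ⟨fun v => lo v + ε * g v, ?_, ?_⟩
  · intro j hj
    show lo j + ε * (g j : ℝ) = u j
    rw [hloB j hj, hgB j hj]
    simp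
  · intro i j hij
    show lo j + ε * (g j : ℝ) < lo i + ε * (g i : ℝ)
    rcases eq_or_ne (lo j) (lo i) with heq | hne
    · have hg := hg_lt i j hij heq
      have hgR : (g j : ℝ) < g i := by exact_mod_cast hg
      rw [heq]
      nlinarith
    · have hlt : lo j < lo i := lt_of_le_of_ne (hlo_mono i j hij) hne
      have hδ := hδle i j hlt
      have hgj : (g j : ℝ) ≤ (Fintype.card V : ℝ) := by exact_mod_cast hg_le j
      have h1 : ε * (g j : ℝ) ≤ ε * (Fintype.card V : ℝ) :=
        mul_le_mul_of_nonneg_left hgj hεpos.le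
      have h2 : (0:ℝ) ≤ ε * g i := by positivity
      nlinarith

/-- The map sending a chamber `C` of the Dirichlet arrangement to the
orientation `σ(C)` (orienting `ij` from `i` to `j` iff `x_i > x_j` on `C`) is a
bijection onto the set of acyclic orientations of `G` respecting `u`.  This is
expressed by: (a) the orientation of any point of the complement `M` is an acyclic
orientation respecting `u`; (b) two points of `M` have the same orientation iff they
lie in the same chamber (connected component of `M`); (c) every acyclic orientation
respecting `u` arises from some point of `M`. -/
theorem dirichlet_chambers_biject_semicompatible_orientations
    (V : Type*) [Fintype V] (G : SimpleGraph V) (hconn : G.Connected)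
    (B : Set V) (hB2 : 2 ≤ Nat.card B)
    (hBindep : ∀ i ∈ B, ∀ j ∈ B, ¬ G.Adj i j)
    (u : V → ℝ) (hu : Set.InjOn u B)
    (M : Set (V → ℝ))
    (hM : M = {x | (∀ j ∈ B, x j = u j) ∧ ∀ i j : V, G.Adj i j → x i ≠ x j})
    (ori : (V → ℝ) → V → V → Prop)
    (hori : ∀ x i j, ori x i j ↔ (G.Adj i j ∧ x j < x i)) :
    (∀ x ∈ M,
      (∀ i j : V, G.Adj i j → (ori x i j ↔ ¬ ori x j i)) ∧
      (∀ v : V, ¬ Relation.TransGen (ori x) v v) ∧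
      (∀ i ∈ B, ∀ j ∈ B, Relation.TransGen (ori x) i j → u j < u i)) ∧
    (∀ x ∈ M, ∀ y ∈ M, (ori x = ori y ↔ y ∈ connectedComponentIn M x)) ∧
    (∀ o : V → V → Prop,
      (∀ i j : V, o i j → G.Adj i j) →
      (∀ i j : V, G.Adj i j → (o i j ↔ ¬ o j i)) →
      (∀ v : V, ¬ Relation.TransGen o v v) →
      (∀ i ∈ B, ∀ j ∈ B, Relation.TransGen o i j → u j < u i) →
      ∃ x ∈ M, ori x = o) := by
  classical
  have hBne : B.Nonempty := by
    rcases Set.eq_empty_or_nonempty B with rfl | h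
    · simp at hB2
    · exact h
  refine ⟨?_, ?_, ?_⟩
  -- Part (a)
  · intro x hx
    have hx' := hx; rw [hM] at hx'
    have key : ∀ a b : V, Relation.TransGen (ori x) a b → x b < x a := by
      intro a b hab
      induction hab with
      | single h => exact ((hori x _ _).mp h).2
      | tail h1 h2 ih => exact lt_trans ((hori x _ _).mp h2).2 ih
    refine ⟨?_, ?_, ?_⟩
    · intro i j hadj
      rw [hori, hori]
      constructor
      · rintro ⟨_, hlt⟩ ⟨_, hlt'⟩
        exact lt_asymm hlt hlt'
      · intro hn
        refine ⟨hadj, ?_⟩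
        rcases lt_or_gt_of_ne (hx'.2 i j hadj) with h | h
        · exact absurd ⟨hadj.symm, h⟩ hn
        · exact h
    · exact fun v hv => lt_irrefl _ (key v v hv)
    · intro i hi j hj hij
      have h := key i j hij
      rwa [hx'.1 i hi, hx'.1 j hj] at h
  -- Part (b)
  · intro x hx y hy
    have hxM := hx; rw [hM] at hxM
    have hyM := hy; rw [hM] at hyM
    constructor
    · -- same orientation → same chamber, via segment
      intro h
      have hsame : ∀ i j : V, G.Adj i j → (x j < x i ↔ y j < y i) := by
        intro i j hadj
        have h2 : ori x i j ↔ ori y i j := iff_of_eq (congrFun (congrFun h i) j)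
        rw [hori, hori] at h2
        simpa [hadj] using h2
      have hseg : segment ℝ x y ⊆ M := by
        rintro z hz
        obtain ⟨a, b, ha, hb, hab, rfl⟩ := hz
        have hcomb : ∀ p q p' q' : ℝ, p < q → p' < q' → a * p + b * p' < a * q + b * q' := by
          intro p q p' q' h1 h2
          rcases eq_or_lt_of_le ha with heq | hapos
          · have hb1 : b = 1 := by linarith
            rw [← heq, hb1]
            simpa using h2
          · have h3 := mul_lt_mul_of_pos_left h1 hapos
            have h4 := mul_le_mul_of_nonneg_left h2.le hb
            linarith
        rw [hM]
        constructor
        · intro j hj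
          simp only [Pi.add_apply, Pi.smul_apply, smul_eq_mul, hxM.1 j hj, hyM.1 j hj]
          linear_combination (u j) * hab
        · intro i j hadj
          have hxne := hxM.2 i j hadj
          have hyne := hyM.2 i j hadj
          have hiff := hsame i j hadj
          simp only [Pi.add_apply, Pi.smul_apply, smul_eq_mul]
          rcases lt_or_gt_of_ne hxne with hlt | hlt
          · have hy' : y i < y j :=
              lt_of_le_of_ne (not_lt.mp fun hc => absurd (hiff.mpr hc) (not_lt.mpr hlt.le)) hyne
            exact ne_of_lt (hcomb _ _ _ _ hlt hy')
          · have hy' : y j < y i := hiff.mp hlt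
            exact ne_of_gt (hcomb _ _ _ _ hlt hy')
      exact (convex_segment x y).isPreconnected.subset_connectedComponentIn
        (left_mem_segment ℝ x y) hseg (right_mem_segment ℝ x y)
    · -- same chamber → same orientation, via local constancy
      intro h
      set W : (V → ℝ) → Set (V → ℝ) :=
        fun z => {w | ∀ i j : V, G.Adj i j → 0 < (z i - z j) * (w i - w j)} with hWdef
      have hWopen : ∀ z, IsOpen (W z) := by
        intro z
        have heq : W z = ⋂ i, ⋂ j, {w : V → ℝ | G.Adj i j → 0 < (z i - z j) * (w i - w j)} := by
          ext w
          simp [hWdef, Set.mem_iInter]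
        rw [heq]
        refine isOpen_iInter_of_finite fun i => isOpen_iInter_of_finite fun j => ?_
        by_cases hadj : G.Adj i j
        · have heq2 : {w : V → ℝ | G.Adj i j → 0 < (z i - z j) * (w i - w j)}
              = {w : V → ℝ | 0 < (z i - z j) * (w i - w j)} := by
            ext w; simp [hadj]
          rw [heq2]
          exact isOpen_lt continuous_const
            (continuous_const.mul ((continuous_apply i).sub (continuous_apply j)))
        · have heq2 : {w : V → ℝ | G.Adj i j → 0 < (z i - z j) * (w i - w j)} = Set.univ := by
            ext w; simp [hadj]
          rw [heq2]; exact isOpen_univ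
      have hWmem : ∀ z ∈ M, z ∈ W z := by
        intro z hz
        rw [hM] at hz
        simp only [hWdef, Set.mem_setOf_eq]
        intro i j hadj
        exact mul_self_pos.mpr (sub_ne_zero.mpr (hz.2 i j hadj))
      have hWori : ∀ z w, w ∈ W z → ori w = ori z := by
        intro z w hw
        simp only [hWdef, Set.mem_setOf_eq] at hw
        funext i j
        apply propext
        rw [hori, hori]
        by_cases hadj : G.Adj i j
        · have h0 := hw i j hadj
          rcases mul_pos_iff.mp h0 with ⟨h1, h2⟩ | ⟨h1, h2⟩
          · simp [hadj, sub_pos.mp h1, sub_pos.mp h2]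
          · constructor
            · rintro ⟨_, hlt⟩
              exact absurd hlt (not_lt.mpr (sub_neg.mp h2).le)
            · rintro ⟨_, hlt⟩
              exact absurd hlt (not_lt.mpr (sub_neg.mp h1).le)
        · simp [hadj]
      set U1 : Set (V → ℝ) := ⋃ z ∈ {z : V → ℝ | z ∈ M ∧ ori z = ori x}, W z with hU1
      set U2 : Set (V → ℝ) := ⋃ z ∈ {z : V → ℝ | z ∈ M ∧ ¬ ori z = ori x}, W z with hU2
      have hcover : connectedComponentIn M x ⊆ U1 ∪ U2 := by
        intro w hw
        have hwM : w ∈ M := connectedComponentIn_subset M x hw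
        by_cases hc : ori w = ori x
        · exact Or.inl (Set.mem_biUnion (show w ∈ _ from ⟨hwM, hc⟩) (hWmem w hwM))
        · exact Or.inr (Set.mem_biUnion (show w ∈ _ from ⟨hwM, hc⟩) (hWmem w hwM))
      have hdisj : Disjoint U1 U2 := by
        rw [Set.disjoint_left]
        rintro w hw1 hw2
        simp only [hU1, hU2, Set.mem_iUnion] at hw1 hw2
        obtain ⟨z1, ⟨hz1M, hz1⟩, hwz1⟩ := hw1
        obtain ⟨z2, ⟨hz2M, hz2⟩, hwz2⟩ := hw2
        exact hz2 ((hWori z2 w hwz2).symm.trans ((hWori z1 w hwz1).trans hz1))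
      rcases isPreconnected_connectedComponentIn.subset_or_subset
          (isOpen_biUnion fun z _ => hWopen z) (isOpen_biUnion fun z _ => hWopen z)
          hdisj hcover with h1 | h2
      · have hy1 := h1 h
        simp only [hU1, Set.mem_iUnion] at hy1
        obtain ⟨z, ⟨hzM, hz⟩, hyz⟩ := hy1
        exact (((hWori z y hyz).trans hz)).symm
      · exfalso
        have hx1 := h2 (mem_connectedComponentIn hx)
        simp only [hU2, Set.mem_iUnion] at hx1
        obtain ⟨z, ⟨hzM, hz⟩, hxz⟩ := hx1
        exact hz (hWori z x hxz).symm
  -- Part (c)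
  · intro o ho_adj ho_tot ho_acyc ho_resp
    -- augment o with the boundary order
    set r : V → V → Prop := fun a b => o a b ∨ (a ∈ B ∧ b ∈ B ∧ u b < u a) with hrdef
    have claimA : ∀ a b : V, Relation.TransGen r a b →
        Relation.TransGen o a b ∨ ∃ p q, p ∈ B ∧ q ∈ B ∧ u q < u p ∧
          Relation.ReflTransGen o a p ∧ Relation.ReflTransGen o q b := by
      intro a b h
      induction h with
      | single h =>
        rcases h with h | ⟨hp, hq, hlt⟩
        · exact Or.inl (Relation.TransGen.single h)
        · exact Or.inr ⟨a, _, hp, hq, hlt, Relation.ReflTransGen.refl, Relation.ReflTransGen.refl⟩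
      | tail h1 h2 ih =>
        rename_i b c
        rcases h2 with h2 | ⟨hp, hq, hlt⟩
        · rcases ih with ih | ⟨p, q, hp, hq, hlt, hap, hqb⟩
          · exact Or.inl (ih.tail h2)
          · exact Or.inr ⟨p, q, hp, hq, hlt, hap, hqb.tail h2⟩
        · rcases ih with ih | ⟨p, q, hp', hq', hlt', hap, hqb⟩
          · exact Or.inr ⟨b, c, hp, hq, hlt, ih.to_reflTransGen, Relation.ReflTransGen.refl⟩
          · have hle : u b ≤ u q := by
              rcases Relation.reflTransGen_iff_eq_or_transGen.mp hqb with heq | htg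
              · rw [heq]
              · exact (ho_resp q hq' b hp htg).le
            exact Or.inr ⟨p, c, hp', hq, (lt_of_lt_of_le hlt hle).trans hlt', hap,
              Relation.ReflTransGen.refl⟩
    have hTirr : ∀ v : V, ¬ Relation.TransGen r v v := by
      intro v hv
      rcases claimA v v hv with h | ⟨p, q, hp, hq, hlt, hvp, hqv⟩
      · exact ho_acyc v h
      · have hqp : Relation.ReflTransGen o q p := hqv.trans hvp
        rcases Relation.reflTransGen_iff_eq_or_transGen.mp hqp with heq | htg
        · rw [heq] at hlt; exact lt_irrefl _ hlt
        · exact absurd (ho_resp q hq p hp htg) (not_lt.mpr hlt.le)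
    have hpo : IsPartialOrder V (fun a b => a = b ∨ Relation.TransGen r a b) :=
      { refl := fun a => Or.inl rfl
        trans := by
          intro a b c hab hbc
          rcases hab with rfl | hab
          · exact hbc
          rcases hbc with rfl | hbc
          · exact Or.inr hab
          · exact Or.inr (hab.trans hbc)
        antisymm := by
          intro a b hab hba
          rcases hab with rfl | hab
          · rfl
          rcases hba with rfl | hba
          · rfl
          exact absurd (hab.trans hba) (hTirr a) }
    obtain ⟨s, hlin, hsub⟩ :=
      @extend_partialOrder V (fun a b => a = b ∨ Relation.TransGen r a b) hpo
    haveI := hlin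
    have hstrans : ∀ {a b c : V}, s a b → s b c → s a c :=
      fun hab hbc => IsTrans.trans _ _ _ hab hbc
    have hsanti : ∀ {a b : V}, s a b → s b a → a = b :=
      fun h1 h2 => Std.Antisymm.antisymm _ _ h1 h2
    set L : V → V → Prop := fun a b => s a b ∧ a ≠ b with hLdef
    have hLtrans : ∀ {a b c : V}, L a b → L b c → L a c := by
      rintro a b c ⟨h1, hne1⟩ ⟨h2, hne2⟩
      refine ⟨hstrans h1 h2, ?_⟩
      rintro rfl
      exact hne1 (hsanti h1 h2)
    have hLirr : ∀ a : V, ¬ L a a := fun a h => h.2 rfl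
    have hTL : ∀ {a b : V}, Relation.TransGen r a b → L a b := by
      intro a b h
      refine ⟨hsub a b (Or.inr h), ?_⟩
      rintro rfl
      exact hTirr a h
    have hBkey : ∀ {b1 b2 : V}, b1 ∈ B → b2 ∈ B → L b1 b2 → u b2 < u b1 := by
      intro b1 b2 h1 h2 hL
      rcases lt_trichotomy (u b2) (u b1) with hc | hc | hc
      · exact hc
      · exact absurd (hu h1 h2 hc.symm) hL.2
      · have hL' : L b2 b1 := hTL (Relation.TransGen.single (Or.inr ⟨h2, h1, hc⟩))
        exact absurd (hsanti hL.1 hL'.1) hL.2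
    obtain ⟨x, hxB, hxL⟩ := aux_interp B u hBne L hLtrans hLirr hBkey
    have hxo : ∀ i j : V, o i j → x j < x i :=
      fun i j hij => hxL i j (hTL (Relation.TransGen.single (Or.inl hij)))
    refine ⟨x, ?_, ?_⟩
    · rw [hM]
      refine ⟨hxB, ?_⟩
      intro i j hadj
      by_cases hij : o i j
      · exact ne_of_gt (hxo i j hij)
      · have hji : o j i := not_not.mp (mt (ho_tot i j hadj).mpr hij)
        exact ne_of_lt (hxo j i hji)
    · funext i j
      apply propext
      rw [hori]
      constructor
      · rintro ⟨hadj, hlt⟩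
        by_contra hij
        have hji : o j i := not_not.mp (mt (ho_tot i j hadj).mpr hij)
        exact lt_asymm hlt (hxo j i hji)
      · intro hij
        exact ⟨ho_adj i j hij, hxo i j hij⟩
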